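/- Let B be a building set of a simplicial complex C and N ⊆ B. Then the following are equivalent: (1) N is nested in B with respect to C (i.e., for every N-antichain {β₁,…,βₜ}, the union β₁ ∪ … ∪ βₜ belongs to C − B); (2) N ⊆ B, ⋃N ∈ C, and every N-antichain misses B (its union is not in B). -/

import Mathlib

/-- A (finite abstract) simplicial complex: a family of finite sets
containing the empty set and closed under taking subsets. -/
def IsSimplicialComplex {V : Type*} (C : Set (Finset V)) : Prop :=
  ∅ ∈ C ∧ ∀ α ∈ C, ∀ β ⊆ α, β ∈ C

/-- A building set of the power set P(γ): a family containing all singletons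
{a} for a ∈ γ and closed under unions of intersecting members. -/
def IsBuildingSetOfPowerset {V : Type*} [DecidableEq V]
    (γ : Finset V) (B : Set (Finset V)) : Prop :=
  (∀ β ∈ B, ∀ δ ∈ B, (β ∩ δ).Nonempty → β ∪ δ ∈ B) ∧
  (∀ a ∈ γ, ({a} : Finset V) ∈ B)

/-- B ⊆ C is a building set of the simplicial complex C when for each γ ∈ C,
B ∩ P(γ) is a building set of P(γ). -/
def IsBuildingSet {V : Type*} [DecidableEq V] (C B : Set (Finset V)) : Prop :=
  B ⊆ C ∧ ∀ γ ∈ C, IsBuildingSetOfPowerset γ {β ∈ B | β ⊆ γ}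

/-- An N-antichain: a subset of N with at least two elements whose members
are pairwise incomparable with respect to inclusion. -/
def IsNAntichain {V : Type*} (N S : Finset (Finset V)) : Prop :=
  S ⊆ N ∧ 2 ≤ S.card ∧ ∀ β ∈ S, ∀ γ ∈ S, β ≠ γ → ¬ β ⊆ γ

/-- N ⊆ B is nested (w.r.t. the building set B of the complex C) when the
union of every N-antichain belongs to C − B. -/
def Nested {V : Type*} [DecidableEq V] (C B : Set (Finset V))
    (N : Finset (Finset V)) : Prop :=
  ↑N ⊆ B ∧ ∀ S : Finset (Finset V), IsNAntichain N S →
    S.sup id ∈ C ∧ S.sup id ∉ B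

/-- For B a building set of a simplicial complex C and N ⊆ B, the following
are equivalent: (1) N is nested; (2) N ⊆ B, ⋃N ∈ C, and every N-antichain
misses B. -/
theorem stmt7 {V : Type*} [DecidableEq V]
    (C B : Set (Finset V)) (hC : IsSimplicialComplex C)
    (hB : IsBuildingSet C B) (N : Finset (Finset V)) (hN : ↑N ⊆ B) :
    Nested C B N ↔
      (↑N ⊆ B ∧ N.sup id ∈ C ∧
        ∀ S : Finset (Finset V), IsNAntichain N S → S.sup id ∉ B) := by
  constructor
  · rintro ⟨hNB, hanti⟩
    refine ⟨hNB, ?_, fun S hS => (hanti S hS).2⟩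
    -- set of maximal elements of N
    classical
    set M : Finset (Finset V) := N.filter (fun β => ∀ γ ∈ N, β ⊆ γ → β = γ) with hM
    have hMN : M ⊆ N := Finset.filter_subset _ _
    -- every element of N is contained in some element of M
    have hcov : ∀ β ∈ N, ∃ m ∈ M, β ⊆ m := by
      intro β hβ
      obtain ⟨m, hm, hmax⟩ : ∃ m ∈ N.filter (fun γ => β ⊆ γ), ∀ x ∈ N.filter (fun γ => β ⊆ γ), ¬ m < x := by
        obtain ⟨m, hm⟩ := Finset.exists_maximal (s := N.filter (fun γ => β ⊆ γ))
          ⟨β, Finset.mem_filter.2 ⟨hβ, le_refl β⟩⟩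
        exact ⟨m, hm.1, fun x hx hlt => lt_irrefl m (lt_of_lt_of_le hlt (hm.2 hx hlt.le))⟩
      rw [Finset.mem_filter] at hm
      refine ⟨m, Finset.mem_filter.2 ⟨hm.1, fun γ hγ hmγ => ?_⟩, hm.2⟩
      by_contra hne
      exact hmax γ (Finset.mem_filter.2 ⟨hγ, hm.2.trans hmγ⟩) (lt_of_le_of_ne hmγ hne)
    have hsup : N.sup id = M.sup id := by
      apply le_antisymm
      · apply Finset.sup_le
        intro β hβ
        obtain ⟨m, hm, hβm⟩ := hcov β hβ
        exact le_trans hβm (Finset.le_sup (f := id) hm)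
      · exact Finset.sup_mono hMN
    rw [hsup]
    rcases Nat.lt_or_ge M.card 2 with hlt | hge
    · interval_cases h : M.card
      · rw [Finset.card_eq_zero.1 h]
        simpa using hC.1
      · obtain ⟨m, hm⟩ := Finset.card_eq_one.1 h
        rw [hm]
        simpa using hB.1 (hNB (hMN (hm ▸ Finset.mem_singleton_self m)))
    · have : IsNAntichain N M := by
        refine ⟨hMN, hge, fun β hβ γ hγ hne hsub => ?_⟩
        rw [hM, Finset.mem_filter] at hβ
        exact hne (hβ.2 γ (hMN hγ) hsub)
      exact (hanti M this).1
  · rintro ⟨hNB, hsupC, hmiss⟩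
    refine ⟨hNB, fun S hS => ⟨?_, hmiss S hS⟩⟩
    exact hC.2 _ hsupC _ (Finset.sup_mono hS.1)
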